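/- For nonzero polynomials p, q in the free associative algebra K⟨X⟩, the Hankel rank of the product satisfies rank(pq) = rank(p) + rank(q) − 1, where rank denotes the rank of the (possibly infinite) Hankel matrix. -/

import Mathlib

open Finsupp Submodule FreeMonoid
/-- The Hankel rank of `p ∈ K⟨X⟩`: the dimension of the row space of the
Hankel matrix `(w₁, w₂) ↦ (coefficient of w₁w₂ in p)`. -/
noncomputable def hankelRank {K X : Type*} [Field K]
    (p : MonoidAlgebra K (FreeMonoid X)) : ℕ :=
  Module.finrank K (Submodule.span K
    (Set.range (fun w₁ : FreeMonoid X => (fun w₂ : FreeMonoid X => p.coeff (w₁ * w₂)))))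

namespace HankelAux
variable {K X : Type*} [Field K]

noncomputable def lquot (w : FreeMonoid X) :
    MonoidAlgebra K (FreeMonoid X) →ₗ[K] MonoidAlgebra K (FreeMonoid X) :=
  (MonoidAlgebra.coeffLinearEquiv K).symm.toLinearMap ∘ₗ
    Finsupp.lcomapDomain (fun v => w * v) (fun _ _ h => mul_left_cancel h) ∘ₗ
    (MonoidAlgebra.coeffLinearEquiv K).toLinearMap

@[simp] lemma lquot_apply (w : FreeMonoid X) (p : MonoidAlgebra K (FreeMonoid X))
    (v : FreeMonoid X) : (lquot w p).coeff v = p.coeff (w * v) := rfl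

lemma lquot_one (p : MonoidAlgebra K (FreeMonoid X)) : lquot 1 p = p := by
  ext v; simp

lemma lquot_lquot (w t : FreeMonoid X) (p : MonoidAlgebra K (FreeMonoid X)) :
    lquot t (lquot w p) = lquot (w * t) p := by
  ext v; simp [mul_assoc]

lemma lquot_single_mul (w t : FreeMonoid X) (a : K) :
    lquot w (MonoidAlgebra.single (w * t) a) = MonoidAlgebra.single t a := by
  ext v
  rw [lquot_apply]
  by_cases h : t = v
  · subst h; simp
  · rw [MonoidAlgebra.coeff_single, MonoidAlgebra.coeff_single, Finsupp.single_eq_of_ne' h,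
      Finsupp.single_eq_of_ne']
    exact fun hh => h (mul_left_cancel hh)

lemma lquot_single_of_ne (w m : FreeMonoid X) (a : K) (h : ∀ t, m ≠ w * t) :
    lquot w (MonoidAlgebra.single m a) = 0 := by
  ext v
  rw [lquot_apply, MonoidAlgebra.coeff_single, Finsupp.single_eq_of_ne' (h v),
    MonoidAlgebra.coeff_zero, Finsupp.coe_zero, Pi.zero_apply]

lemma of_mul_ne_one (x : X) (w : FreeMonoid X) : of x * w ≠ 1 := by
  intro h
  have := congrArg FreeMonoid.length h
  simp at this

noncomputable def sg (u : FreeMonoid X) (a : K) : MonoidAlgebra K (FreeMonoid X) :=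
  MonoidAlgebra.single u a

lemma sg_def (u : FreeMonoid X) (a : K) : sg u a = MonoidAlgebra.single u a := rfl

lemma lquot_of_single_single (x : X) (u v : FreeMonoid X) (a b : K) :
    lquot (of x) (sg u a * sg v b) =
      (lquot (of x) (sg u a)) * sg v b + ((sg u a).coeff 1) • lquot (of x) (sg v b) := by
  rw [sg_def, sg_def, MonoidAlgebra.single_mul_single]
  induction u using FreeMonoid.inductionOn' with
  | one =>
    rw [lquot_single_of_ne (of x) 1 a (fun t h => of_mul_ne_one x t h.symm), zero_mul, zero_add,
      MonoidAlgebra.coeff_single, Finsupp.single_eq_same, one_mul, ← map_smul,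
      MonoidAlgebra.smul_single']
  | of_mul y u' _ =>
    rw [MonoidAlgebra.coeff_single, Finsupp.single_eq_of_ne' (of_mul_ne_one y u'), zero_smul,
      add_zero]
    by_cases hyx : y = x
    · subst hyx
      rw [mul_assoc, lquot_single_mul, lquot_single_mul, MonoidAlgebra.single_mul_single]
    · have hne : ∀ (m : FreeMonoid X) t, of y * m ≠ of x * t := by
        intro m t h
        exact hyx (List.head_eq_of_cons_eq (congrArg toList h))
      rw [lquot_single_of_ne _ _ _ (fun t => by rw [mul_assoc]; exact hne (u' * v) t),
        lquot_single_of_ne _ _ _ (hne u'), zero_mul]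

lemma lquot_of_mul (x : X) (p q : MonoidAlgebra K (FreeMonoid X)) :
    lquot (of x) (p * q) = (lquot (of x) p) * q + (p.coeff 1) • lquot (of x) q := by
  induction q using MonoidAlgebra.induction_on with
  | of v =>
    induction p using MonoidAlgebra.induction_on with
    | of u => simpa only [sg_def, MonoidAlgebra.of_apply] using lquot_of_single_single x u v 1 1
    | add f g hf hg =>
      rw [add_mul, map_add, hf, hg, map_add, add_mul, MonoidAlgebra.coeff_add, Finsupp.add_apply,
        add_smul]; abel
    | smul r f hf =>
      rw [smul_mul_assoc, map_smul, hf, map_smul, smul_mul_assoc, MonoidAlgebra.coeff_smul,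
        Finsupp.smul_apply,
        smul_eq_mul, smul_add, mul_smul]
  | add f g hf hg => rw [mul_add, map_add, hf, hg, mul_add, map_add, smul_add]; abel
  | smul r f hf =>
    rw [mul_smul_comm, map_smul, hf, smul_add, mul_smul_comm, map_smul, smul_comm r (p.coeff 1)]


/-- The span of all left-quotient rows of `p`. -/
noncomputable def VF (p : MonoidAlgebra K (FreeMonoid X)) :
    Submodule K (MonoidAlgebra K (FreeMonoid X)) :=
  span K (Set.range fun w : FreeMonoid X => lquot w p)

/-- The span of the proper (non-identity-indexed) left-quotient rows of `q`. -/
noncomputable def VN (q : MonoidAlgebra K (FreeMonoid X)) :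
    Submodule K (MonoidAlgebra K (FreeMonoid X)) :=
  span K ((fun s : FreeMonoid X => lquot s q) '' {s | s ≠ 1})

lemma lquot_mem_VF (p : MonoidAlgebra K (FreeMonoid X)) (w : FreeMonoid X) :
    lquot w p ∈ VF p := subset_span ⟨w, rfl⟩

lemma lquot_mem_VN (q : MonoidAlgebra K (FreeMonoid X)) {s : FreeMonoid X} (hs : s ≠ 1) :
    lquot s q ∈ VN q := subset_span ⟨s, hs, rfl⟩

/-- Degree = maximal length of a word in the support. -/
noncomputable def deg (p : MonoidAlgebra K (FreeMonoid X)) : ℕ :=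
  p.coeff.support.sup FreeMonoid.length

lemma apply_eq_zero_of_deg_lt (p : MonoidAlgebra K (FreeMonoid X)) (w : FreeMonoid X)
    (h : deg p < w.length) : p.coeff w = 0 := by
  by_contra h'
  exact absurd (Finset.le_sup (f := FreeMonoid.length) (Finsupp.mem_support_iff.2 h'))
    (not_le.2 h)

lemma exists_max_word {p : MonoidAlgebra K (FreeMonoid X)} (hp : p ≠ 0) :
    ∃ w ∈ p.coeff.support, w.length = deg p := by
  obtain ⟨w, hw, hw2⟩ := Finset.exists_mem_eq_sup p.coeff.support
    (Finsupp.support_nonempty_iff.2 (fun h => hp (MonoidAlgebra.coeff_eq_zero.1 h)))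
    FreeMonoid.length
  exact ⟨w, hw, hw2.symm⟩


/-- The suffix set of the support of `p` is finite. -/
lemma suffixes_finite (p : MonoidAlgebra K (FreeMonoid X)) :
    Set.Finite {v : FreeMonoid X | ∃ u, u * v ∈ p.coeff.support} := by
  apply Set.Finite.subset (Set.Finite.biUnion (p.coeff.support : Finset (FreeMonoid X)).finite_toSet
    (fun w _ => Set.finite_range (fun n : Fin (w.length + 1) =>
      ofList ((toList w).drop (n : ℕ)))))
  rintro v ⟨u, hu⟩
  refine Set.mem_biUnion hu ⟨⟨u.length, ?_⟩, ?_⟩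
  · have : (u * v).length = u.length + v.length := FreeMonoid.length_mul u v
    omega
  · show ofList ((toList (u * v)).drop u.length) = v
    have : toList (u * v) = toList u ++ toList v := rfl
    rw [this]
    have h2 : List.drop u.length (toList u ++ toList v) = toList v := List.drop_left
    rw [h2]
    rfl

lemma mem_span_singles {f : MonoidAlgebra K (FreeMonoid X)} {T : Set (FreeMonoid X)}
    (h : ∀ v ∈ f.coeff.support, v ∈ T) :
    f ∈ span K ((fun v => (MonoidAlgebra.single v 1 : MonoidAlgebra K (FreeMonoid X))) '' T) := by
  rw [← MonoidAlgebra.sum_coeff_single f, Finsupp.sum]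
  apply sum_mem
  intro v hv
  have h1 : (MonoidAlgebra.single v (f.coeff v) : MonoidAlgebra K (FreeMonoid X)) =
      (f.coeff v) • (MonoidAlgebra.single v 1 : MonoidAlgebra K (FreeMonoid X)) := by
    rw [MonoidAlgebra.smul_single', mul_one]
  rw [h1]
  exact smul_mem _ _ (subset_span ⟨v, h v hv, rfl⟩)

instance VF_finiteDimensional (p : MonoidAlgebra K (FreeMonoid X)) :
    FiniteDimensional K (VF p) := by
  have hfin : Set.Finite ((fun v => (MonoidAlgebra.single v 1 : MonoidAlgebra K (FreeMonoid X)))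
      '' {v : FreeMonoid X | ∃ u, u * v ∈ p.coeff.support}) := (suffixes_finite p).image _
  haveI := FiniteDimensional.span_of_finite K hfin
  apply Submodule.finiteDimensional_of_le
    (S₂ := span K ((fun v => (MonoidAlgebra.single v 1 : MonoidAlgebra K (FreeMonoid X)))
      '' {v : FreeMonoid X | ∃ u, u * v ∈ p.coeff.support}))
  rw [VF, span_le]
  rintro _ ⟨w, rfl⟩
  apply mem_span_singles
  intro v hv
  exact ⟨w, Finsupp.mem_support_iff.2 (by simpa using Finsupp.mem_support_iff.1 hv)⟩

lemma VN_le_VF (q : MonoidAlgebra K (FreeMonoid X)) : VN q ≤ VF q := by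
  rw [VN, span_le]
  rintro _ ⟨s, _, rfl⟩
  exact lquot_mem_VF q s

instance VN_finiteDimensional (q : MonoidAlgebra K (FreeMonoid X)) :
    FiniteDimensional K (VN q) :=
  Submodule.finiteDimensional_of_le (S₂ := VF q) (VN_le_VF q)

/-- Polynomials all of whose words have length `< n`. -/
noncomputable def degLT (n : ℕ) : Submodule K (MonoidAlgebra K (FreeMonoid X)) where
  carrier := {x | ∀ w : FreeMonoid X, x.coeff w ≠ 0 → w.length < n}
  zero_mem' := by intro w hw; simp at hw
  add_mem' := by
    intro x y hx hy w hw
    by_cases h1 : x.coeff w ≠ 0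
    · exact hx w h1
    · push_neg at h1
      refine hy w ?_
      intro h2
      apply hw
      rw [MonoidAlgebra.coeff_add, Finsupp.add_apply, h1, h2, add_zero]
  smul_mem' := by
    intro c x hx w hw
    refine hx w ?_
    intro h
    apply hw
    rw [MonoidAlgebra.coeff_smul, Finsupp.smul_apply, h, smul_zero]

lemma VN_le_degLT (q : MonoidAlgebra K (FreeMonoid X)) : VN q ≤ degLT (deg q) := by
  rw [VN, span_le]
  rintro _ ⟨s, hs, rfl⟩
  intro v hv
  rw [lquot_apply] at hv
  have h1 : (s * v).length ≤ deg q := by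
    by_contra h
    exact hv (apply_eq_zero_of_deg_lt q _ (not_le.1 h))
  have h2 : (s * v).length = s.length + v.length := FreeMonoid.length_mul s v
  have h3 : s.length ≠ 0 := fun h => hs (FreeMonoid.length_eq_zero.1 h)
  omega

lemma q_not_mem_degLT {q : MonoidAlgebra K (FreeMonoid X)} (hq : q ≠ 0) :
    q ∉ degLT (deg q) := by
  obtain ⟨w, hw, hwl⟩ := exists_max_word hq
  intro h
  have := h w (Finsupp.mem_support_iff.1 hw)
  omega

lemma q_not_mem_VN {q : MonoidAlgebra K (FreeMonoid X)} (hq : q ≠ 0) : q ∉ VN q :=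
  fun h => q_not_mem_degLT hq (VN_le_degLT q h)


lemma mul_apply_max {v q : MonoidAlgebra K (FreeMonoid X)} {u s : FreeMonoid X}
    (hu : u ∈ v.coeff.support) (humax : ∀ u' ∈ v.coeff.support, u'.length ≤ u.length)
    (hs : s ∈ q.coeff.support) (hsmax : ∀ s' ∈ q.coeff.support, s'.length ≤ s.length) :
    (v * q).coeff (u * s) = v.coeff u * q.coeff s := by
  classical
  rw [MonoidAlgebra.coeff_mul]
  simp only [Finsupp.sum]
  have hout : ∀ b ∈ v.coeff.support, b ≠ u →
      (∑ a2 ∈ q.coeff.support, if b * a2 = u * s then v.coeff b * q.coeff a2 else 0) = 0 := by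
    intro b hb hbne
    apply Finset.sum_eq_zero
    intro a2 ha2
    rw [if_neg]
    intro hEq
    have hlb := humax b hb
    have hla := hsmax a2 ha2
    have hlen : b.length + a2.length = u.length + s.length := by
      have h := congrArg FreeMonoid.length hEq
      rwa [FreeMonoid.length_mul, FreeMonoid.length_mul] at h
    have hble : b.length = u.length := by omega
    have h2 : toList b ++ toList a2 = toList u ++ toList s := congrArg toList hEq
    exact hbne ((List.append_inj h2 hble).1)
  rw [Finset.sum_eq_single_of_mem u hu hout]
  have hin : ∀ b ∈ q.coeff.support, b ≠ s →
      (if u * b = u * s then v.coeff u * q.coeff b else 0) = 0 := by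
    intro b _ hbne
    exact if_neg (fun h => hbne (mul_left_cancel h))
  rw [Finset.sum_eq_single_of_mem s hs hin, if_pos rfl]

lemma eq_zero_of_mul_mem_degLT {q : MonoidAlgebra K (FreeMonoid X)} (hq : q ≠ 0)
    {v : MonoidAlgebra K (FreeMonoid X)} (h : v * q ∈ degLT (deg q)) : v = 0 := by
  by_contra hv
  obtain ⟨u, hu, hul⟩ := exists_max_word hv
  obtain ⟨s, hs, hsl⟩ := exists_max_word hq
  have humax : ∀ u' ∈ v.coeff.support, u'.length ≤ u.length := fun u' h' => by
    have h1 := Finset.le_sup (f := FreeMonoid.length) h'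
    have h2 : v.coeff.support.sup FreeMonoid.length = deg v := rfl
    omega
  have hsmax : ∀ s' ∈ q.coeff.support, s'.length ≤ s.length := fun s' h' => by
    have h1 := Finset.le_sup (f := FreeMonoid.length) h'
    have h2 : q.coeff.support.sup FreeMonoid.length = deg q := rfl
    omega
  have hc : (v * q).coeff (u * s) ≠ 0 := by
    rw [mul_apply_max hu humax hs hsmax]
    exact mul_ne_zero (Finsupp.mem_support_iff.1 hu) (Finsupp.mem_support_iff.1 hs)
  have hlt := h (u * s) hc
  rw [FreeMonoid.length_mul] at hlt
  omega

lemma eq_zero_of_mul_eq_zero {q : MonoidAlgebra K (FreeMonoid X)} (hq : q ≠ 0)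
    {v : MonoidAlgebra K (FreeMonoid X)} (h : v * q = 0) : v = 0 :=
  eq_zero_of_mul_mem_degLT hq (by rw [h]; exact zero_mem _)

lemma mulRight_injective {q : MonoidAlgebra K (FreeMonoid X)} (hq : q ≠ 0) :
    Function.Injective (LinearMap.mulRight K q) := by
  intro a b hab
  have : (a - b) * q = 0 := by
    rw [sub_mul]
    simpa [LinearMap.mulRight_apply] using sub_eq_zero_of_eq hab
  have := eq_zero_of_mul_eq_zero hq this
  exact sub_eq_zero.1 this

/-- Key identity: the quotient of a product differs from the product of the quotient
by an element of `VN q`. -/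
lemma diff_mem (q : MonoidAlgebra K (FreeMonoid X)) (w : FreeMonoid X) :
    ∀ p : MonoidAlgebra K (FreeMonoid X), lquot w (p * q) - (lquot w p) * q ∈ VN q := by
  induction w using FreeMonoid.inductionOn' with
  | one => intro p; rw [lquot_one, lquot_one, sub_self]; exact zero_mem _
  | of_mul x w' ih =>
    intro p
    rw [← lquot_lquot (of x) w', ← lquot_lquot (of x) w', lquot_of_mul, map_add, map_smul,
      lquot_lquot (of x) w' q]
    have h2 : (p.coeff 1) • lquot (of x * w') q ∈ VN q :=
      smul_mem _ _ (lquot_mem_VN q (of_mul_ne_one x w'))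
    have h3 := add_mem (ih (lquot (of x) p)) h2
    convert h3 using 1
    abel


lemma VF_eq_VN_sup_span (q : MonoidAlgebra K (FreeMonoid X)) :
    VF q = VN q ⊔ span K {q} := by
  apply le_antisymm
  · rw [VF, span_le]
    rintro _ ⟨w, rfl⟩
    show lquot w q ∈ (VN q ⊔ span K {q} : Submodule K (MonoidAlgebra K (FreeMonoid X)))
    by_cases hw : w = 1
    · subst hw
      rw [lquot_one]
      exact mem_sup_right (mem_span_singleton_self q)
    · exact mem_sup_left (lquot_mem_VN q hw)
  · refine sup_le (VN_le_VF q) (span_le.2 ?_)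
    rw [Set.singleton_subset_iff]
    have h := lquot_mem_VF q 1
    rwa [lquot_one] at h

lemma finrank_VF_eq_finrank_VN_add_one {q : MonoidAlgebra K (FreeMonoid X)} (hq : q ≠ 0) :
    Module.finrank K (VF q) = Module.finrank K (VN q) + 1 := by
  haveI : FiniteDimensional K (span K ({q} : Set (MonoidAlgebra K (FreeMonoid X)))) :=
    FiniteDimensional.span_of_finite K (Set.finite_singleton q)
  have hinf : VN q ⊓ span K {q} = ⊥ := by
    rw [eq_bot_iff]
    rintro x ⟨hx1, hx2⟩
    obtain ⟨c, rfl⟩ := mem_span_singleton.1 hx2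
    rcases eq_or_ne c 0 with rfl | hc
    · simp
    · have h2 := smul_mem (VN q) c⁻¹ hx1
      rw [smul_smul, inv_mul_cancel₀ hc, one_smul] at h2
      exact absurd h2 (q_not_mem_VN hq)
  have key := Submodule.finrank_sup_add_finrank_inf_eq (VN q) (span K {q})
  rw [hinf, finrank_bot, add_zero, finrank_span_singleton hq, ← VF_eq_VN_sup_span] at key
  exact key

lemma sup_VN_eq (p q : MonoidAlgebra K (FreeMonoid X)) :
    VF (p * q) ⊔ VN q = Submodule.map (LinearMap.mulRight K q) (VF p) ⊔ VN q := by
  apply le_antisymm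
  · refine sup_le ?_ le_sup_right
    rw [VF, span_le]
    rintro _ ⟨w, rfl⟩
    show lquot w (p * q) ∈
      (Submodule.map (LinearMap.mulRight K q) (VF p) ⊔ VN q :
        Submodule K (MonoidAlgebra K (FreeMonoid X)))
    have h1 : lquot w (p * q) = (lquot w p) * q + (lquot w (p * q) - (lquot w p) * q) := by
      abel
    rw [h1]
    refine add_mem (mem_sup_left ?_) (mem_sup_right (diff_mem q w p))
    exact Submodule.mem_map.2 ⟨lquot w p, lquot_mem_VF p w, LinearMap.mulRight_apply _ _ _⟩
  · refine sup_le ?_ le_sup_right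
    rw [VF, Submodule.map_span, span_le]
    rintro _ ⟨_, ⟨w, rfl⟩, rfl⟩
    show LinearMap.mulRight K q (lquot w p) ∈ _
    rw [LinearMap.mulRight_apply]
    have h1 : lquot w p * q = lquot w (p * q) - (lquot w (p * q) - lquot w p * q) := by
      abel
    rw [h1]
    exact sub_mem (mem_sup_left (lquot_mem_VF (p * q) w)) (mem_sup_right (diff_mem q w p))

lemma map_inf_VN_eq_bot {q : MonoidAlgebra K (FreeMonoid X)} (hq : q ≠ 0)
    (p : MonoidAlgebra K (FreeMonoid X)) :
    Submodule.map (LinearMap.mulRight K q) (VF p) ⊓ VN q = ⊥ := by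
  rw [eq_bot_iff]
  rintro x ⟨hx1, hx2⟩
  obtain ⟨v, _, rfl⟩ := Submodule.mem_map.1 hx1
  rw [LinearMap.mulRight_apply] at hx2 ⊢
  have hv : v = 0 := eq_zero_of_mul_mem_degLT hq (VN_le_degLT q hx2)
  rw [hv, zero_mul]
  exact zero_mem _

lemma lquot_max_word {p : MonoidAlgebra K (FreeMonoid X)} {w₀ : FreeMonoid X}
    (hw : w₀ ∈ p.coeff.support) (hmax : w₀.length = deg p) :
    lquot w₀ p = MonoidAlgebra.single 1 (p.coeff w₀) := by
  ext v
  rcases eq_or_ne v 1 with rfl | hv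
  · rw [lquot_apply, mul_one, MonoidAlgebra.coeff_single, Finsupp.single_eq_same]
  · rw [lquot_apply, MonoidAlgebra.coeff_single, Finsupp.single_eq_of_ne' (Ne.symm hv)]
    apply apply_eq_zero_of_deg_lt
    rw [FreeMonoid.length_mul]
    have h1 : v.length ≠ 0 := fun h => hv (FreeMonoid.length_eq_zero.1 h)
    omega

lemma single_one_mul (c : K) (q : MonoidAlgebra K (FreeMonoid X)) :
    (MonoidAlgebra.single (1 : FreeMonoid X) c) * q = c • q := by
  have h : (MonoidAlgebra.single (1 : FreeMonoid X) c) =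
      c • (1 : MonoidAlgebra K (FreeMonoid X)) := by
    rw [MonoidAlgebra.one_def, MonoidAlgebra.smul_single', mul_one]
  rw [h, smul_mul_assoc, one_mul]

lemma lquot_single_one (t : FreeMonoid X) (ht : t ≠ 1) (c : K) :
    lquot t (MonoidAlgebra.single (1 : FreeMonoid X) c) = 0 := by
  apply lquot_single_of_ne
  intro v h
  have h0 := congrArg FreeMonoid.length h
  rw [FreeMonoid.length_one, FreeMonoid.length_mul] at h0
  exact ht (FreeMonoid.length_eq_zero.1 (by omega))

lemma VN_le_VF_mul {p : MonoidAlgebra K (FreeMonoid X)} (hp : p ≠ 0)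
    (q : MonoidAlgebra K (FreeMonoid X)) : VN q ≤ VF (p * q) := by
  obtain ⟨w₀, hw₀, hw₀l⟩ := exists_max_word hp
  have hc : p.coeff w₀ ≠ 0 := Finsupp.mem_support_iff.1 hw₀
  set r : MonoidAlgebra K (FreeMonoid X) := lquot w₀ (p * q) with hr
  set VNr : Submodule K (MonoidAlgebra K (FreeMonoid X)) :=
    span K ((fun t : FreeMonoid X => lquot t r) '' {t | t ≠ 1}) with hVNr
  have hz : r - (p.coeff w₀) • q ∈ VN q := by
    have h := diff_mem q w₀ p
    rwa [lquot_max_word hw₀ hw₀l, single_one_mul] at h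
  have claim : ∀ (m : ℕ) (t : FreeMonoid X), t ≠ 1 → deg q + 1 ≤ t.length + m →
      lquot t q ∈ VNr := by
    intro m
    induction m with
    | zero =>
      intro t ht hlen
      have h0 : lquot t q = 0 := by
        ext v
        rw [lquot_apply]
        have := apply_eq_zero_of_deg_lt q (t * v)
          (by rw [FreeMonoid.length_mul]; omega)
        rw [this]
        simp
      rw [h0]
      exact zero_mem _
    | succ m ih =>
      intro t ht hlen
      have hdec : lquot t q = (p.coeff w₀)⁻¹ • (lquot t r - lquot t (r - (p.coeff w₀) • q)) := by
        rw [map_sub, map_smul, sub_sub_cancel, smul_smul, inv_mul_cancel₀ hc, one_smul]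
      rw [hdec]
      apply smul_mem
      refine sub_mem (subset_span ⟨t, ht, rfl⟩) ?_
      have hmem : lquot t (r - (p.coeff w₀) • q) ∈ Submodule.map (lquot t) (VN q) :=
        Submodule.mem_map_of_mem hz
      rw [VN, Submodule.map_span] at hmem
      refine span_le.2 ?_ hmem
      rintro _ ⟨_, ⟨s, hs, rfl⟩, rfl⟩
      show lquot t (lquot s q) ∈ VNr
      rw [lquot_lquot]
      have hs1 : s.length ≠ 0 := fun h0 => hs (FreeMonoid.length_eq_zero.1 h0)
      refine ih (s * t) (fun h => ?_) ?_
      · have h0 := congrArg FreeMonoid.length h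
        rw [FreeMonoid.length_mul, FreeMonoid.length_one] at h0
        omega
      · rw [FreeMonoid.length_mul]
        omega
  have hVN_le_VNr : VN q ≤ VNr := by
    rw [VN, span_le]
    rintro _ ⟨s, hs, rfl⟩
    exact claim (deg q + 1) s hs (by omega)
  have hVNr_le : VNr ≤ VF (p * q) := by
    rw [hVNr, span_le]
    rintro _ ⟨t, _, rfl⟩
    show lquot t r ∈ VF (p * q)
    rw [hr, lquot_lquot]
    exact lquot_mem_VF _ _
  exact le_trans hVN_le_VNr hVNr_le

lemma finrank_VF_mul {p q : MonoidAlgebra K (FreeMonoid X)} (hp : p ≠ 0) (hq : q ≠ 0) :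
    Module.finrank K (VF (p * q)) = Module.finrank K (VF p) + Module.finrank K (VN q) := by
  have hsub : VN q ≤ VF (p * q) := VN_le_VF_mul hp q
  have hsup : VF (p * q) = Submodule.map (LinearMap.mulRight K q) (VF p) ⊔ VN q := by
    rw [← sup_VN_eq p q, sup_eq_left.2 hsub]
  haveI : FiniteDimensional K (Submodule.map (LinearMap.mulRight K q) (VF p)) :=
    Module.Finite.map (VF p) (LinearMap.mulRight K q)
  have key := Submodule.finrank_sup_add_finrank_inf_eq
    (Submodule.map (LinearMap.mulRight K q) (VF p)) (VN q)
  rw [map_inf_VN_eq_bot hq p, finrank_bot, add_zero] at key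
  have hmapeq : Module.finrank K (Submodule.map (LinearMap.mulRight K q) (VF p)) =
      Module.finrank K (VF p) :=
    (LinearEquiv.finrank_eq (Submodule.equivMapOfInjective _ (mulRight_injective hq)
      (VF p))).symm
  rw [hsup, key, hmapeq]


/-- The coefficient-function embedding, as a linear map. -/
noncomputable def coeL : MonoidAlgebra K (FreeMonoid X) →ₗ[K] (FreeMonoid X → K) where
  toFun f := ⇑f.coeff
  map_add' a b := by ext w; exact Finsupp.add_apply a.coeff b.coeff w
  map_smul' c a := by ext w; exact Finsupp.smul_apply c a.coeff w

lemma hankelRank_eq (p : MonoidAlgebra K (FreeMonoid X)) :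
    hankelRank p = Module.finrank K (VF p) := by
  have hco : (fun w₁ : FreeMonoid X => (fun w₂ : FreeMonoid X => p.coeff (w₁ * w₂))) =
      (coeL (K := K) (X := X)) ∘ (fun w => lquot w p) := rfl
  rw [hankelRank, hco, Set.range_comp, Submodule.span_image]
  exact (LinearEquiv.finrank_eq (Submodule.equivMapOfInjective _
    (fun a b h => MonoidAlgebra.ext (Finsupp.ext (fun w => congrFun h w))) (VF p))).symm

end HankelAux

/-- For nonzero polynomials, `rank(pq) = rank(p) + rank(q) − 1`. -/
theorem hankelRank_mul {K X : Type*} [Field K]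
    (p q : MonoidAlgebra K (FreeMonoid X)) (hp : p ≠ 0) (hq : q ≠ 0) :
    hankelRank (p * q) = hankelRank p + hankelRank q - 1 := by
  have h1 := HankelAux.hankelRank_eq (p * q)
  have h2 := HankelAux.hankelRank_eq p
  have h3 := HankelAux.hankelRank_eq q
  have h4 := HankelAux.finrank_VF_mul hp hq
  have h5 := HankelAux.finrank_VF_eq_finrank_VN_add_one hq
  omega
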